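/- If n divides m and m/n is not a prime power, then there exist integer polynomials a(x), b(x) such that 1 = a(x)·Φ_m(x) + b(x)·Φ_n(x). -/

import Mathlib

open Polynomial

lemma key_cyclotomic_comb (m n d : ℕ) (hn : 0 < n) (hnd : n ∣ d) (hdm : d ∣ m)
    (hlt : d < m) :
    ∃ a b : ℤ[X], a * cyclotomic m ℤ + b * cyclotomic n ℤ = C ((m / d : ℕ) : ℤ) := by
  have hd : 0 < d := by
    rcases Nat.eq_zero_or_pos d with rfl | h
    · exact absurd (zero_dvd_iff.mp hdm) (by omega)
    · exact h
  have hm : 0 < m := hd.trans hlt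
  set s := m / d with hs
  have hds : d * s = m := Nat.mul_div_cancel' hdm
  set g : ℤ[X] := ∑ i ∈ Finset.range s, (X ^ d) ^ i with hg
  have h1 : g * (X ^ d - 1) = X ^ m - 1 := by
    rw [hg, geom_sum_mul, ← pow_mul, hds]
  have hne : (X ^ d - 1 : ℤ[X]) ≠ 0 := by
    intro h
    have := congrArg (eval 0) h
    simp [zero_pow hd.ne'] at this
  -- product formula
  have hsub : d.divisors ⊆ m.divisors := Nat.divisors_subset_of_dvd hm.ne' hdm
  have hprod : (∏ i ∈ m.divisors \ d.divisors, cyclotomic i ℤ) * (X ^ d - 1) = X ^ m - 1 := by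
    rw [← prod_cyclotomic_eq_X_pow_sub_one hd ℤ, ← prod_cyclotomic_eq_X_pow_sub_one hm ℤ,
      Finset.prod_sdiff hsub]
  have hgeq : g = ∏ i ∈ m.divisors \ d.divisors, cyclotomic i ℤ :=
    mul_right_cancel₀ hne (h1.trans hprod.symm)
  have hmmem : m ∈ m.divisors \ d.divisors := by
    rw [Finset.mem_sdiff]
    refine ⟨Nat.mem_divisors_self m hm.ne', fun h => ?_⟩
    exact absurd (Nat.le_of_dvd hd (Nat.mem_divisors.mp h).1) (not_le.mpr hlt)
  have hdvd1 : cyclotomic m ℤ ∣ g := hgeq ▸ Finset.dvd_prod_of_mem _ hmmem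
  have hdvd2 : cyclotomic n ℤ ∣ g - C (s : ℤ) := by
    have h2 : g - C (s : ℤ) = ∑ i ∈ Finset.range s, ((X ^ d) ^ i - 1) := by
      rw [Finset.sum_sub_distrib, Finset.sum_const, Finset.card_range]
      simp [hg]
    rw [h2]
    have hxd : cyclotomic n ℤ ∣ (X ^ d - 1 : ℤ[X]) := by
      refine (cyclotomic.dvd_X_pow_sub_one n ℤ).trans ?_
      obtain ⟨c, rfl⟩ := hnd
      simpa [pow_mul] using sub_dvd_pow_sub_pow ((X : ℤ[X]) ^ n) 1 c
    exact Finset.dvd_sum fun i _ => hxd.trans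
      (by simpa using sub_dvd_pow_sub_pow ((X : ℤ[X]) ^ d) 1 i)
  obtain ⟨c, hc⟩ := hdvd1
  obtain ⟨h, hh⟩ := hdvd2
  exact ⟨c, -h, by linear_combination hh - hc⟩

theorem cyclotomic_dvd_not_prime_pow (m n : ℕ) (hn : 0 < n) (hdvd : n ∣ m)
    (hlt : n < m) (hnpp : ¬ IsPrimePow (m / n)) :
    ∃ a b : ℤ[X], a * cyclotomic m ℤ + b * cyclotomic n ℤ = 1 := by
  set k := m / n with hk
  have hnk : n * k = m := Nat.mul_div_cancel' hdvd
  have hk1 : 1 < k := by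
    rcases Nat.lt_or_ge k 2 with h | h
    · interval_cases k <;> omega
    · omega
  have hp : k.minFac.Prime := Nat.minFac_prime (by omega)
  set p := k.minFac with hpdef
  set a := k.factorization p with ha
  set u := p ^ a with hu
  set v := k / u with hv
  have hk0 : k ≠ 0 := by omega
  have huv : u * v = k := Nat.ordProj_mul_ordCompl_eq_self k p
  have hpv : Nat.Coprime p v := Nat.coprime_ordCompl hp hk0
  have hcop : Nat.Coprime u v := Nat.Coprime.pow_left a hpv
  have ha1 : 1 ≤ a := (hp.factorization_pos_of_dvd hk0 (Nat.minFac_dvd k))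
  have hu1 : 1 < u := by
    calc 1 < p := hp.one_lt
    _ ≤ p ^ a := Nat.le_self_pow (by omega) p
  have hv1 : 1 < v := by
    rcases Nat.lt_or_ge v 2 with h | h
    · interval_cases v
      · omega
      · exfalso; exact hnpp ⟨p, a, hp.prime, by omega, by simpa using huv⟩
    · omega
  -- d1 = n * u, quotient v ; d2 = n * v, quotient u
  have h0n : 0 < n := hn
  obtain ⟨a1, b1, e1⟩ := key_cyclotomic_comb m n (n * u) hn ⟨u, rfl⟩
    ⟨v, by rw [← hnk, ← huv, mul_assoc]⟩ (by nlinarith [Nat.one_le_iff_ne_zero.mpr hk0])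
  obtain ⟨a2, b2, e2⟩ := key_cyclotomic_comb m n (n * v) hn ⟨v, rfl⟩
    ⟨u, by rw [← hnk, ← huv, mul_assoc, mul_comm v u]⟩ (by nlinarith)
  have hq1 : m / (n * u) = v := by
    rw [← hnk, ← huv, ← mul_assoc, Nat.mul_div_cancel_left _ (by positivity)]
  have hq2 : m / (n * v) = u := by
    rw [← hnk, ← huv, mul_comm u v, ← mul_assoc, Nat.mul_div_cancel_left _ (by positivity)]
  rw [hq1] at e1
  rw [hq2] at e2
  obtain ⟨x, y, hxy⟩ := Nat.isCoprime_iff_coprime.mpr hcop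
  refine ⟨C x * a2 + C y * a1, C x * b2 + C y * b1, ?_⟩
  have h3 : C x * C (u : ℤ) + C y * C (v : ℤ) = (1 : ℤ[X]) := by
    rw [← C_mul, ← C_mul, ← C_add, hxy, C_1]
  linear_combination C x * e2 + C y * e1 + h3
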